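/- For all natural numbers n ≥ 0, ∑_{k=0}^n (C(n,k))² H_k² = C(2n,n)·(4H_n² − 4H_{2n}H_n + H_{2n}² − H_{2n}^{(2)} + 3·∑_{i=1}^n 1/(i²·C(2i,i))). -/

import Mathlib

def H (n : ℕ) : ℚ := ∑ k ∈ Finset.Icc 1 n, (1 : ℚ) / k
def Hgen (o n : ℕ) : ℚ := ∑ k ∈ Finset.Icc 1 n, (1 : ℚ) / (k : ℚ) ^ o

def ch (n k : ℕ) : ℚ := (n.choose k : ℚ)

lemma H_zero : H 0 = 0 := by simp [H]
lemma H2_zero : Hgen 2 0 = 0 := by simp [Hgen]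
lemma H_succ (n : ℕ) : H (n+1) = H n + 1/((n:ℚ)+1) := by
  unfold H
  rw [Finset.sum_Icc_succ_top (by omega : 1 ≤ n+1)]
  push_cast; ring
lemma H2_succ (n : ℕ) : Hgen 2 (n+1) = Hgen 2 n + 1/((n:ℚ)+1)^2 := by
  unfold Hgen
  rw [Finset.sum_Icc_succ_top (by omega : 1 ≤ n+1)]
  push_cast; ring

lemma ch_top (n : ℕ) : ch n (n+1) = 0 := by simp [ch, Nat.choose_succ_self]
lemma ch_zero (n : ℕ) : ch n 0 = 1 := by simp [ch]

lemma ratio (n k : ℕ) : ((k:ℚ)+1) * ch n (k+1) = ((n:ℚ) - k) * ch n k := by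
  rcases le_or_gt k n with h | h
  · have := Nat.choose_succ_right_eq n k
    have hc : ((n.choose (k+1) * (k+1) : ℕ) : ℚ) = ((n.choose k * (n - k) : ℕ) : ℚ) := by
      rw [this]
    push_cast [Nat.cast_sub h] at hc
    unfold ch; linarith
  · have h1 : n.choose (k+1) = 0 := Nat.choose_eq_zero_of_lt (by omega)
    have h2 : n.choose k = 0 := Nat.choose_eq_zero_of_lt h
    simp [ch, h1, h2]

lemma pascal (n k : ℕ) : ch (n+1) (k+1) = ch n k + ch n (k+1) := by
  unfold ch; rw [Nat.choose_succ_succ]; push_cast; ring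

lemma absorb (n k : ℕ) : ((n:ℚ)+1) * ch n k = ((k:ℚ)+1) * ch (n+1) (k+1) := by
  have := Nat.add_one_mul_choose_eq n k
  have hc : (((n+1) * n.choose k : ℕ) : ℚ) = (((n+1).choose (k+1) * (k+1) : ℕ) : ℚ) := by
    exact_mod_cast this
  push_cast at hc
  unfold ch; linarith

def P (k : ℕ) : ℚ := (H k)^2 + Hgen 2 k

def SA (n : ℕ) : ℚ := ∑ k ∈ Finset.range (n+1), ch n k ^ 2
def SB (n : ℕ) : ℚ := ∑ k ∈ Finset.range (n+1), ch n k ^ 2 * H k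
def SM (n : ℕ) : ℚ := ∑ k ∈ Finset.range (n+1), ch n k ^ 2 * Hgen 2 k
def SP (n : ℕ) : ℚ := ∑ k ∈ Finset.range (n+1), ch n k ^ 2 * P k

def G0 (n : ℕ) : ℕ → ℚ
  | 0 => 0
  | (k+1) => ch n k ^ 2 * (2*(k:ℚ) - 3*(n:ℚ) - 1)

def G1 (n : ℕ) : ℕ → ℚ
  | 0 => 0
  | (k+1) => ch n k ^ 2 * ((2*(k:ℚ) - 3*(n:ℚ) - 1) * H k + (3*(k:ℚ) - 4*(n:ℚ) - 1)/((n:ℚ)+1))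

def G2 (n : ℕ) : ℕ → ℚ
  | 0 => 0
  | (k+1) => ch n k ^ 2 * ((2*(k:ℚ) - 3*(n:ℚ) - 1) * P k
      + 2*(3*(k:ℚ) - 4*(n:ℚ) - 1)/((n:ℚ)+1) * H k + 2*(4*(k:ℚ) - 5*(n:ℚ) - 1)/((n:ℚ)+1)^2)

lemma step0 (n k : ℕ) :
    ((n:ℚ)+1) * ch (n+1) k ^ 2 - 2*(2*(n:ℚ)+1) * ch n k ^ 2 = G0 n (k+1) - G0 n k := by
  cases k with
  | zero => simp [G0, ch]; ring
  | succ j =>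
    have hj : ch n (j+1) = (((n:ℚ) - j) * ch n j) / ((j:ℚ)+1) := by
      rw [eq_div_iff (by positivity)]
      linarith [ratio n j]
    rw [pascal, G0, G0, hj]
    push_cast
    field_simp
    ring

lemma step1 (n k : ℕ) :
    ((n:ℚ)+1) * ch (n+1) k ^ 2 * H k - 2*(2*(n:ℚ)+1) * ch n k ^ 2 * H k
      - ((4*(n:ℚ)+1)/((n:ℚ)+1)) * ch n k ^ 2 = G1 n (k+1) - G1 n k := by
  cases k with
  | zero =>
    simp [G1, ch, H_zero]
    field_simp
    ring
  | succ j =>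
    have hj : ch n (j+1) = (((n:ℚ) - j) * ch n j) / ((j:ℚ)+1) := by
      rw [eq_div_iff (by positivity)]
      linarith [ratio n j]
    rw [pascal, G1, G1, H_succ, hj]
    push_cast
    field_simp
    ring

lemma step2 (n k : ℕ) :
    ((n:ℚ)+1) * ch (n+1) k ^ 2 * P k - 2*(2*(n:ℚ)+1) * ch n k ^ 2 * P k
      - (2*(4*(n:ℚ)+1)/((n:ℚ)+1)) * ch n k ^ 2 * H k
      - (2*(5*(n:ℚ)+1)/((n:ℚ)+1)^2) * ch n k ^ 2 = G2 n (k+1) - G2 n k := by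
  cases k with
  | zero =>
    simp [G2, ch, H_zero, H2_zero, P]
    field_simp
    ring
  | succ j =>
    have hj : ch n (j+1) = (((n:ℚ) - j) * ch n j) / ((j:ℚ)+1) := by
      rw [eq_div_iff (by positivity)]
      linarith [ratio n j]
    rw [pascal, G2, G2]
    unfold P
    rw [H_succ, H2_succ, hj]
    push_cast
    field_simp
    ring

lemma sum_ext (n : ℕ) (w : ℕ → ℚ) :
    ∑ k ∈ Finset.range (n+2), ch n k ^ 2 * w k = ∑ k ∈ Finset.range (n+1), ch n k ^ 2 * w k := by
  rw [Finset.sum_range_succ, ch_top]; ring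

lemma sum_ext1 (n : ℕ) : ∑ k ∈ Finset.range (n+2), ch n k ^ 2 = SA n := by
  rw [SA, Finset.sum_range_succ, ch_top]; ring

lemma G0_top (n : ℕ) : G0 n (n+2) = 0 := by rw [G0, ch_top]; ring
lemma G1_top (n : ℕ) : G1 n (n+2) = 0 := by rw [G1, ch_top]; ring
lemma G2_top (n : ℕ) : G2 n (n+2) = 0 := by rw [G2, ch_top]; ring

lemma pull (s : Finset ℕ) (c : ℚ) (f g : ℕ → ℚ) :
    ∑ k ∈ s, c * f k * g k = c * ∑ k ∈ s, f k * g k := by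
  rw [Finset.mul_sum]; exact Finset.sum_congr rfl fun k _ => by ring

lemma R0 (n : ℕ) : ((n:ℚ)+1) * SA (n+1) = 2*(2*(n:ℚ)+1) * SA n := by
  have tele := Finset.sum_range_sub (G0 n) (n+2)
  have hs : ∑ k ∈ Finset.range (n+2),
      (((n:ℚ)+1) * ch (n+1) k ^ 2 - 2*(2*(n:ℚ)+1) * ch n k ^ 2) = 0 := by
    rw [Finset.sum_congr rfl (fun k _ => step0 n k), tele, G0_top]
    simp [G0]
  rw [Finset.sum_sub_distrib, ← Finset.mul_sum, ← Finset.mul_sum, sum_ext1] at hs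
  have e1 : ∑ k ∈ Finset.range (n+2), ch (n+1) k ^ 2 = SA (n+1) := rfl
  rw [e1] at hs; linarith

lemma R1 (n : ℕ) : ((n:ℚ)+1) * SB (n+1) = 2*(2*(n:ℚ)+1) * SB n + ((4*(n:ℚ)+1)/((n:ℚ)+1)) * SA n := by
  have tele := Finset.sum_range_sub (G1 n) (n+2)
  have hs : ∑ k ∈ Finset.range (n+2),
      (((n:ℚ)+1) * ch (n+1) k ^ 2 * H k - 2*(2*(n:ℚ)+1) * ch n k ^ 2 * H k
        - ((4*(n:ℚ)+1)/((n:ℚ)+1)) * ch n k ^ 2) = 0 := by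
    rw [Finset.sum_congr rfl (fun k _ => step1 n k), tele, G1_top]
    simp [G1]
  rw [Finset.sum_sub_distrib, Finset.sum_sub_distrib, ← Finset.mul_sum,
    sum_ext1, pull, pull, sum_ext n (fun k => H k)] at hs
  have e1 : ∑ k ∈ Finset.range (n+2), ch (n+1) k ^ 2 * H k = SB (n+1) := rfl
  have e2 : ∑ k ∈ Finset.range (n+1), ch n k ^ 2 * H k = SB n := rfl
  rw [e1, e2] at hs; linarith

lemma R2 (n : ℕ) : ((n:ℚ)+1) * SP (n+1) = 2*(2*(n:ℚ)+1) * SP n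
    + (2*(4*(n:ℚ)+1)/((n:ℚ)+1)) * SB n + (2*(5*(n:ℚ)+1)/((n:ℚ)+1)^2) * SA n := by
  have tele := Finset.sum_range_sub (G2 n) (n+2)
  have hs : ∑ k ∈ Finset.range (n+2),
      (((n:ℚ)+1) * ch (n+1) k ^ 2 * P k - 2*(2*(n:ℚ)+1) * ch n k ^ 2 * P k
        - (2*(4*(n:ℚ)+1)/((n:ℚ)+1)) * ch n k ^ 2 * H k
        - (2*(5*(n:ℚ)+1)/((n:ℚ)+1)^2) * ch n k ^ 2) = 0 := by
    rw [Finset.sum_congr rfl (fun k _ => step2 n k), tele, G2_top]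
    simp [G2]
  rw [Finset.sum_sub_distrib, Finset.sum_sub_distrib, Finset.sum_sub_distrib, ← Finset.mul_sum,
    sum_ext1, pull, pull, pull, sum_ext n (fun k => H k), sum_ext n (fun k => P k)] at hs
  have e1 : ∑ k ∈ Finset.range (n+2), ch (n+1) k ^ 2 * P k = SP (n+1) := rfl
  have e2 : ∑ k ∈ Finset.range (n+1), ch n k ^ 2 * P k = SP n := rfl
  have e3 : ∑ k ∈ Finset.range (n+1), ch n k ^ 2 * H k = SB n := rfl
  rw [e1, e2, e3] at hs; linarith

lemma reflect (m : ℕ) : 2 * ∑ j ∈ Finset.range (m+1), (j:ℚ) * ch m j ^ 2 = (m:ℚ) * SA m := by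
  have h := Finset.sum_range_reflect (fun j => (j:ℚ) * ch m j ^ 2) (m+1)
  simp only [Nat.add_sub_cancel] at h
  have h2 : ∑ j ∈ Finset.range (m+1), ((m - j : ℕ):ℚ) * ch m (m - j) ^ 2
      = ∑ j ∈ Finset.range (m+1), ((m:ℚ) - j) * ch m j ^ 2 := by
    refine Finset.sum_congr rfl fun j hj => ?_
    have hj' : j ≤ m := by
      have := Finset.mem_range.mp hj; omega
    rw [Nat.cast_sub hj']
    have : ch m (m - j) = ch m j := by unfold ch; rw [Nat.choose_symm hj']
    rw [this]
  rw [h2] at h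
  have h3 : ∑ j ∈ Finset.range (m+1), ((m:ℚ) - j) * ch m j ^ 2
      = (m:ℚ) * SA m - ∑ j ∈ Finset.range (m+1), (j:ℚ) * ch m j ^ 2 := by
    rw [SA, Finset.mul_sum, ← Finset.sum_sub_distrib]
    exact Finset.sum_congr rfl fun j _ => by ring
  rw [h3] at h
  linarith

lemma stepM (n k : ℕ) :
    ((n:ℚ)+1) * ch (n+1) k ^ 2 * Hgen 2 k - 2*(2*(n:ℚ)+1) * ch n k ^ 2 * Hgen 2 k
      = (G0 n (k+1) * Hgen 2 (k+1) - G0 n k * Hgen 2 k)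
        - (2*(k:ℚ) - 3*(n:ℚ) - 1) * ch (n+1) (k+1) ^ 2 / ((n:ℚ)+1)^2 := by
  have h0 := step0 n k
  have hsq : ((n:ℚ)+1)^2 * ch n k ^ 2 = ((k:ℚ)+1)^2 * ch (n+1) (k+1) ^ 2 := by
    have habs := absorb n k
    calc ((n:ℚ)+1)^2 * ch n k ^ 2 = (((n:ℚ)+1) * ch n k)^2 := by ring
    _ = (((k:ℚ)+1) * ch (n+1) (k+1))^2 := by rw [habs]
    _ = ((k:ℚ)+1)^2 * ch (n+1) (k+1) ^ 2 := by ring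
  have key : ch n k ^ 2 * (1/((k:ℚ)+1)^2) = ch (n+1) (k+1) ^ 2 * (1/((n:ℚ)+1)^2) := by
    have hk1 : ((k:ℚ)+1) ≠ 0 := by positivity
    have hn1 : ((n:ℚ)+1) ≠ 0 := by positivity
    field_simp
    linarith [hsq]
  rw [H2_succ, G0] at *
  linear_combination (Hgen 2 k) * h0 - (2*(k:ℚ)-3*(n:ℚ)-1) * key

lemma Rm (n : ℕ) : ((n:ℚ)+1) * SM (n+1) = 2*(2*(n:ℚ)+1) * SM n + (2 * SA (n+1) - 3)/((n:ℚ)+1) := by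
  have tele := Finset.sum_range_sub (fun k => G0 n k * Hgen 2 k) (n+2)
  try simp only [] at tele
  have hs : ∑ k ∈ Finset.range (n+2),
      (((n:ℚ)+1) * ch (n+1) k ^ 2 * Hgen 2 k - 2*(2*(n:ℚ)+1) * ch n k ^ 2 * Hgen 2 k)
      = (G0 n (n+2) * Hgen 2 (n+2) - G0 n 0 * Hgen 2 0)
        - ∑ k ∈ Finset.range (n+2), (2*(k:ℚ) - 3*(n:ℚ) - 1) * ch (n+1) (k+1) ^ 2 / ((n:ℚ)+1)^2 := by
    rw [Finset.sum_congr rfl (fun k _ => stepM n k), Finset.sum_sub_distrib, tele]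
  rw [G0_top] at hs
  simp only [G0, zero_mul, mul_zero, zero_sub, sub_zero] at hs
  -- compute J := ∑ k in range(n+2), (2k-3n-1) ch(n+1,k+1)^2
  set g : ℕ → ℚ := fun j => (2*(j:ℚ) - 3*(n:ℚ) - 3) * ch (n+1) j ^ 2 with hg
  have hshift : ∑ k ∈ Finset.range (n+2), (2*(k:ℚ) - 3*(n:ℚ) - 1) * ch (n+1) (k+1) ^ 2
      = ∑ k ∈ Finset.range (n+2), g (k+1) := by
    refine Finset.sum_congr rfl fun k _ => ?_
    rw [hg]; push_cast; ring
  have hfull : ∑ j ∈ Finset.range (n+3), g j = ∑ k ∈ Finset.range (n+2), g (k+1) + g 0 :=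
    Finset.sum_range_succ' g (n+2)
  have htop : ∑ j ∈ Finset.range (n+3), g j = ∑ j ∈ Finset.range (n+2), g j := by
    rw [Finset.sum_range_succ]
    have : ch (n+1) (n+2) = 0 := ch_top (n+1)
    rw [hg]; simp [this]
  have hg0 : g 0 = -3*(n:ℚ) - 3 := by rw [hg]; simp [ch_zero]
  have hmain : ∑ j ∈ Finset.range (n+2), g j = -2*((n:ℚ)+1) * SA (n+1) := by
    have hsplit : ∑ j ∈ Finset.range (n+2), g j
        = 2 * ∑ j ∈ Finset.range (n+2), (j:ℚ) * ch (n+1) j ^ 2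
          - (3*(n:ℚ)+3) * SA (n+1) := by
      rw [SA, Finset.mul_sum, Finset.mul_sum, ← Finset.sum_sub_distrib]
      exact Finset.sum_congr rfl fun j _ => by rw [hg]; ring
    rw [hsplit, reflect (n+1)]
    push_cast; ring
  have hJ : ∑ k ∈ Finset.range (n+2), g (k+1) = -2*((n:ℚ)+1) * SA (n+1) + 3*(n:ℚ) + 3 := by
    have := hfull
    rw [htop, hmain, hg0] at this
    linarith
  -- assemble
  have hdiv : ∑ k ∈ Finset.range (n+2), (2*(k:ℚ) - 3*(n:ℚ) - 1) * ch (n+1) (k+1) ^ 2 / ((n:ℚ)+1)^2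
      = (∑ k ∈ Finset.range (n+2), (2*(k:ℚ) - 3*(n:ℚ) - 1) * ch (n+1) (k+1) ^ 2) / ((n:ℚ)+1)^2 := by
    rw [Finset.sum_div]
  rw [hdiv, hshift, hJ] at hs
  have hexp : ∑ k ∈ Finset.range (n+2),
      (((n:ℚ)+1) * ch (n+1) k ^ 2 * Hgen 2 k - 2*(2*(n:ℚ)+1) * ch n k ^ 2 * Hgen 2 k)
      = ((n:ℚ)+1) * SM (n+1) - 2*(2*(n:ℚ)+1) * SM n := by
    rw [Finset.sum_sub_distrib, pull, pull, sum_ext n (fun k => Hgen 2 k)]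
    rfl
  rw [hexp] at hs
  have hn1 : ((n:ℚ)+1) ≠ 0 := by positivity
  have h2 : (-((-2*((n:ℚ)+1) * SA (n+1) + 3*(n:ℚ) + 3) / ((n:ℚ)+1)^2))
      = (2 * SA (n+1) - 3)/((n:ℚ)+1) := by
    field_simp
    ring
  rw [h2] at hs
  linarith


def cb (n : ℕ) : ℚ := ch (2*n) n
def T (n : ℕ) : ℚ := ∑ i ∈ Finset.Icc 1 n, 1 / ((i:ℚ)^2 * ch (2*i) i)

lemma cb_pos (n : ℕ) : 0 < cb n := by
  unfold cb ch
  exact_mod_cast Nat.choose_pos (by omega : n ≤ 2*n)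

lemma cb_succ (n : ℕ) : ((n:ℚ)+1) * cb (n+1) = 2*(2*(n:ℚ)+1) * cb n := by
  have h := Nat.succ_mul_centralBinom_succ n
  have h2 : ((n+1) * Nat.centralBinom (n+1) : ℕ) = (2 * (2*n+1) * Nat.centralBinom n : ℕ) := h
  have h3 : (((n+1) * Nat.centralBinom (n+1) : ℕ) : ℚ) = ((2 * (2*n+1) * Nat.centralBinom n : ℕ) : ℚ) := by
    exact_mod_cast h2
  unfold cb ch
  unfold Nat.centralBinom at h3
  push_cast at h3
  have e1 : 2*(n+1) = 2*n+2 := by ring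
  rw [e1]
  convert h3 using 2 <;> push_cast <;> ring

lemma T_succ (n : ℕ) : T (n+1) = T n + 1/(((n:ℚ)+1)^2 * cb (n+1)) := by
  unfold T
  rw [Finset.sum_Icc_succ_top (by omega : 1 ≤ n+1)]
  unfold cb
  push_cast
  norm_num

lemma H_two (n : ℕ) : H (2*(n+1)) = H (2*n) + 1/(2*(n:ℚ)+1) + 1/(2*(n:ℚ)+2) := by
  have e1 : 2*(n+1) = (2*n+1)+1 := by ring
  rw [e1, H_succ, H_succ]
  push_cast
  ring

lemma H2_two (n : ℕ) : Hgen 2 (2*(n+1)) = Hgen 2 (2*n) + 1/(2*(n:ℚ)+1)^2 + 1/(2*(n:ℚ)+2)^2 := by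
  have e1 : 2*(n+1) = (2*n+1)+1 := by ring
  rw [e1, H2_succ, H2_succ]
  push_cast
  ring

lemma closedA : ∀ n, SA n = cb n := by
  intro n
  induction n with
  | zero => simp [SA, cb, ch]
  | succ m ih =>
    have h := R0 m
    rw [ih] at h
    have hm : ((m:ℚ)+1) ≠ 0 := by positivity
    have := cb_succ m
    have : ((m:ℚ)+1) * SA (m+1) = ((m:ℚ)+1) * cb (m+1) := by rw [h, this]
    exact mul_left_cancel₀ hm this

lemma closedB : ∀ n, SB n = cb n * (2 * H n - H (2*n)) := by
  intro n
  induction n with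
  | zero => simp [SB, cb, ch, H_zero]
  | succ m ih =>
    have h := R1 m
    rw [ih, closedA] at h
    have hm : ((m:ℚ)+1) ≠ 0 := by positivity
    have hcb := cb_succ m
    have goal' : ((m:ℚ)+1) * SB (m+1) = ((m:ℚ)+1) * (cb (m+1) * (2 * H (m+1) - H (2*(m+1)))) := by
      rw [h, H_two, H_succ]
      have hc : cb (m+1) = 2*(2*(m:ℚ)+1) * cb m / ((m:ℚ)+1) := by
        rw [eq_div_iff hm]; linarith [cb_succ m]
      rw [hc]
      have h21 : (2*(m:ℚ)+1) ≠ 0 := by positivity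
      have h22 : (2*(m:ℚ)+2) ≠ 0 := by positivity
      field_simp
      ring
    exact mul_left_cancel₀ hm goal'

lemma closedM : ∀ n, SM n = cb n * (2 * Hgen 2 n - 3 * T n) := by
  intro n
  induction n with
  | zero => simp [SM, cb, ch, H2_zero, T]
  | succ m ih =>
    have h := Rm m
    rw [ih, closedA] at h
    have hm : ((m:ℚ)+1) ≠ 0 := by positivity
    have hcbne : cb (m+1) ≠ 0 := ne_of_gt (cb_pos (m+1))
    have goal' : ((m:ℚ)+1) * SM (m+1) = ((m:ℚ)+1) * (cb (m+1) * (2 * Hgen 2 (m+1) - 3 * T (m+1))) := by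
      rw [h, H2_succ, T_succ]
      have hc : ((m:ℚ)+1) * cb (m+1) = 2*(2*(m:ℚ)+1) * cb m := cb_succ m
      have hcm : cb m = ((m:ℚ)+1) * cb (m+1) / (2*(2*(m:ℚ)+1)) := by
        rw [eq_div_iff (by positivity)]; linarith [cb_succ m]
      rw [hcm]
      field_simp
      ring
    exact mul_left_cancel₀ hm goal'


theorem closedP : ∀ n, SP n = cb n * ((2 * H n - H (2*n))^2 + 2 * Hgen 2 n - Hgen 2 (2*n)) := by
  intro n
  induction n with
  | zero => simp [SP, P, cb, ch, H_zero, H2_zero]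
  | succ m ih =>
    have h := R2 m
    rw [ih, closedA, closedB] at h
    have hm : ((m:ℚ)+1) ≠ 0 := by positivity
    have goal' : ((m:ℚ)+1) * SP (m+1)
        = ((m:ℚ)+1) * (cb (m+1) * ((2 * H (m+1) - H (2*(m+1)))^2 + 2 * Hgen 2 (m+1) - Hgen 2 (2*(m+1)))) := by
      rw [h, H_two, H2_two, H_succ, H2_succ]
      have hcm : cb m = ((m:ℚ)+1) * cb (m+1) / (2*(2*(m:ℚ)+1)) := by
        rw [eq_div_iff (by positivity)]; linarith [cb_succ m]
      rw [hcm]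
      have h21 : (2*(m:ℚ)+1) ≠ 0 := by positivity
      have h22 : (2*(m:ℚ)+2) ≠ 0 := by positivity
      field_simp
      ring
    exact mul_left_cancel₀ hm goal'

theorem stmt3 (n : ℕ) :
    ∑ k ∈ Finset.range (n + 1), ((n.choose k : ℚ)) ^ 2 * (H k) ^ 2
      = ((2 * n).choose n : ℚ) *
          (4 * (H n) ^ 2 - 4 * H (2 * n) * H n + (H (2 * n)) ^ 2 - Hgen 2 (2 * n)
            + 3 * ∑ i ∈ Finset.Icc 1 n, 1 / ((i : ℚ) ^ 2 * ((2 * i).choose i : ℚ))) := by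
  have hsum : ∑ k ∈ Finset.range (n + 1), ((n.choose k : ℚ)) ^ 2 * (H k) ^ 2 = SP n - SM n := by
    rw [SP, SM, ← Finset.sum_sub_distrib]
    exact Finset.sum_congr rfl fun k _ => by unfold P ch; ring
  rw [hsum, closedP, closedM]
  have hT : T n = ∑ i ∈ Finset.Icc 1 n, 1 / ((i:ℚ)^2 * ((2*i).choose i : ℚ)) := rfl
  have hcb : cb n = ((2*n).choose n : ℚ) := rfl
  rw [← hT, ← hcb]
  ring
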